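/- Let F: R^d → R be differentiable and L-smooth (i.e., ||∇F(x) - ∇F(y)||_2 ≤ L||x-y||_2 for all x,y). Let H be a symmetric positive definite matrix with H ⪰ ρI for some ρ > 0, and suppose x_{t+1} satisfies H(x_t - x_{t+1}) = η m for some vector m and step size η with 0 < η ≤ ρ/(2L). Then F(x_{t+1}) ≤ F(x_t) - (ρ/(2η))||x_t - x_{t+1}||_2² + (η/ρ)||∇F(x_t) - m||_2². -/

import Mathlib

open RealInnerProductSpace

section Aux
open intervalIntegral

variable {E : Type*} [NormedAddCommGroup E] [InnerProductSpace ℝ E] [CompleteSpace E]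

lemma descent_aux (F : E → ℝ) (L : ℝ) (hLpos : 0 < L)
    (hF : Differentiable ℝ F)
    (hL : ∀ x y, ‖gradient F x - gradient F y‖ ≤ L * ‖x - y‖)
    (x x' : E) :
    F x' ≤ F x + ⟪gradient F x, x' - x⟫ + L / 2 * ‖x' - x‖ ^ 2 := by
  set v := x' - x with hv
  have hderiv : ∀ t : ℝ, HasDerivAt (fun t : ℝ => F (x + t • v))
      ⟪gradient F (x + t • v), v⟫ t := by
    intro t
    have h1 : HasFDerivAt F (InnerProductSpace.toDual ℝ E (gradient F (x + t • v))) (x + t • v) :=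
      (hF _).hasGradientAt.hasFDerivAt
    have h2 : HasDerivAt (fun t : ℝ => x + t • v) v t := by
      simpa using ((hasDerivAt_id t).smul_const v).const_add x
    simpa [InnerProductSpace.toDual_apply_apply, Function.comp_def] using h1.comp_hasDerivAt t h2
  have hcontg : Continuous (gradient F) :=
    (LipschitzWith.of_dist_le_mul (K := L.toNNReal) (fun y z => by
      simpa [dist_eq_norm, Real.coe_toNNReal L hLpos.le] using hL y z)).continuous
  have hcont : Continuous fun t : ℝ => ⟪gradient F (x + t • v), v⟫ :=
    ((hcontg.comp (by continuity)).inner continuous_const)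
  have hftc : F x' - F x = ∫ t in (0:ℝ)..1, ⟪gradient F (x + t • v), v⟫ := by
    have := intervalIntegral.integral_eq_sub_of_hasDerivAt
      (f := fun t : ℝ => F (x + t • v)) (a := 0) (b := 1)
      (fun t _ => hderiv t) (hcont.intervalIntegrable 0 1)
    simpa [hv] using this.symm
  have hbound : (∫ t in (0:ℝ)..1, ⟪gradient F (x + t • v), v⟫)
      ≤ ⟪gradient F x, v⟫ + L / 2 * ‖v‖ ^ 2 := by
    have h1 : ∀ t ∈ Set.Icc (0:ℝ) 1,
        ⟪gradient F (x + t • v), v⟫ ≤ ⟪gradient F x, v⟫ + L * t * ‖v‖ ^ 2 := by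
      intro t ht
      have : ⟪gradient F (x + t • v) - gradient F x, v⟫ ≤ L * t * ‖v‖ ^ 2 := by
        calc ⟪gradient F (x + t • v) - gradient F x, v⟫
            ≤ ‖gradient F (x + t • v) - gradient F x‖ * ‖v‖ := real_inner_le_norm _ _
          _ ≤ (L * ‖(x + t • v) - x‖) * ‖v‖ := by
              gcongr; exact hL _ _
          _ = L * (|t| * ‖v‖) * ‖v‖ := by
              rw [add_sub_cancel_left, norm_smul, Real.norm_eq_abs]
          _ = L * t * ‖v‖ ^ 2 := by rw [abs_of_nonneg ht.1]; ring
      have := this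
      rw [inner_sub_left] at this
      linarith
    calc (∫ t in (0:ℝ)..1, ⟪gradient F (x + t • v), v⟫)
        ≤ ∫ t in (0:ℝ)..1, (⟪gradient F x, v⟫ + L * t * ‖v‖ ^ 2) := by
          apply intervalIntegral.integral_mono_on (by norm_num)
            (hcont.intervalIntegrable 0 1) (by apply Continuous.intervalIntegrable; continuity) h1
      _ = ⟪gradient F x, v⟫ + L / 2 * ‖v‖ ^ 2 := by
          rw [intervalIntegral.integral_add (by apply Continuous.intervalIntegrable; continuity)
            (by apply Continuous.intervalIntegrable; continuity)]
          have he : (fun t : ℝ => L * t * ‖v‖ ^ 2) = fun t : ℝ => (L * ‖v‖ ^ 2) * t := by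
            funext t; ring
          rw [he, intervalIntegral.integral_const_mul, integral_id]
          simp; ring
  linarith [hftc, hbound]


variable {E : Type*} [NormedAddCommGroup E] [InnerProductSpace ℝ E] [CompleteSpace E]

lemma young_aux (a b η ρ : ℝ) (hη : 0 < η) (hρ : 0 < ρ) :
    a * b ≤ η / ρ * a ^ 2 + ρ / (4 * η) * b ^ 2 := by
  rw [div_mul_eq_mul_div, div_mul_eq_mul_div,
    div_add_div _ _ (ne_of_gt hρ) (by positivity), le_div_iff₀ (by positivity)]
  nlinarith [sq_nonneg (2 * η * a - ρ * b)]


end Aux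

/-- Descent lemma for preconditioned updates (MARS): if F is L-smooth,
    H is a symmetric linear map with H ⪰ ρI (ρ > 0), the update satisfies
    H(x_t - x_{t+1}) = η m with 0 < η ≤ ρ/(2L), then
    F(x_{t+1}) ≤ F(x_t) - (ρ/(2η))‖x_t - x_{t+1}‖² + (η/ρ)‖∇F(x_t) - m‖². -/
theorem mars_descent_lemma (d : ℕ)
    (F : EuclideanSpace ℝ (Fin d) → ℝ) (L ρ η : ℝ)
    (hF : Differentiable ℝ F)
    (hL : ∀ x y, ‖gradient F x - gradient F y‖ ≤ L * ‖x - y‖)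
    (H : EuclideanSpace ℝ (Fin d) →ₗ[ℝ] EuclideanSpace ℝ (Fin d))
    (hsymm : ∀ x y, ⟪H x, y⟫ = ⟪x, H y⟫)
    (hρ : 0 < ρ) (hH : ∀ v, ρ * ‖v‖ ^ 2 ≤ ⟪H v, v⟫)
    (x x' m : EuclideanSpace ℝ (Fin d))
    (hη : 0 < η) (hηL : η ≤ ρ / (2 * L))
    (hupd : H (x - x') = η • m) :
    F x' ≤ F x - (ρ / (2 * η)) * ‖x - x'‖ ^ 2 + (η / ρ) * ‖gradient F x - m‖ ^ 2 := by 
  have hLpos : 0 < L := by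
    by_contra h
    push_neg at h
    rcases eq_or_lt_of_le h with h0 | h0
    · subst h0; simp at hηL; linarith
    · have : ρ / (2 * L) < 0 := div_neg_of_pos_of_neg hρ (by linarith)
      linarith
  set g := gradient F x with hg
  set v := x - x' with hv
  set a := ‖g - m‖ with ha
  set b := ‖v‖ with hb
  have hdesc : F x' ≤ F x + ⟪g, x' - x⟫ + L / 2 * ‖x' - x‖ ^ 2 :=
    descent_aux F L hLpos hF hL x x'
  have hvx : x' - x = -v := by rw [hv, neg_sub]
  rw [hvx, inner_neg_right, norm_neg] at hdesc
  -- preconditioner bound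
  have hm : ρ * b ^ 2 ≤ η * ⟪m, v⟫ := by
    calc ρ * b ^ 2 ≤ ⟪H v, v⟫ := hH v
      _ = ⟪(η : ℝ) • m, v⟫ := by rw [← hupd]
      _ = η * ⟪m, v⟫ := real_inner_smul_left _ _ _
  have hm' : ρ / η * b ^ 2 ≤ ⟪m, v⟫ := by
    rw [div_mul_eq_mul_div, div_le_iff₀ hη]
    linarith [hm]
  -- Young
  have hy : -⟪g - m, v⟫ ≤ η / ρ * a ^ 2 + ρ / (4 * η) * b ^ 2 := by
    have h1 : -⟪g - m, v⟫ ≤ a * b := by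
      have := abs_real_inner_le_norm (g - m) v
      rw [abs_le] at this
      linarith [this.1]
    exact h1.trans (young_aux a b η ρ hη hρ)
  have hsplit : ⟪g, v⟫ = ⟪g - m, v⟫ + ⟪m, v⟫ := by rw [inner_sub_left]; ring
  have hhalf : L / 2 ≤ ρ / (4 * η) := by
    have h2 : η * (2 * L) ≤ ρ := (le_div_iff₀ (by positivity)).mp hηL
    rw [div_le_div_iff₀ two_pos (by positivity)]
    linarith
  have h1 : L / 2 * b ^ 2 ≤ ρ / (4 * η) * b ^ 2 :=
    mul_le_mul_of_nonneg_right hhalf (sq_nonneg b)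
  have h2 : ρ / (4 * η) * b ^ 2 + ρ / (4 * η) * b ^ 2 - ρ / η * b ^ 2
      = -(ρ / (2 * η) * b ^ 2) := by field_simp; ring
  linarith [hdesc, hy, hm', hsplit, h1, h2]
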